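/- (Rank Lemma for deletion.) Let w ∈ S_{n-1} have vector (r_1, ..., r_{n-1}) and let w' ∈ S_{n-2} be the permutation with vector (r_2, ..., r_{n-1}). Then the matrix A_{w'} is obtained from A_w by deleting the first row and the (r_1+1)-st column. Moreover, for any S ⊆ {2, ..., n}: rk((A_{w'})_{S,j}) = rk((A_w)_{S,j}) for j ≤ r_1, and rk((A_{w'})_{S,j}) = rk((A_w)_{S,j+1}) for j ≥ r_1 (with columns of A_{w'} to the right of the deleted column reindexed by shifting left by one). -/

import Mathlib

/-- `rvecS w j`: the rank of `w⁻¹ j` counted from the smallest among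
`w⁻¹ j, ..., w⁻¹ (m-1)` (0-based indexing); this is the convention under which the
first row of `A_w` has its stars in columns `r_1` and `r_1 + 1` (1-based). -/
def rvecS {m : ℕ} (w : Equiv.Perm (Fin m)) (j : Fin m) : ℕ :=
  (Finset.univ.filter (fun k : Fin m => j ≤ k ∧ w⁻¹ k ≤ w⁻¹ j)).card

/-- The column (0-based) of the distinguished entry `⋆₂` in row `i` of `A_w`:
column `w⁻¹(i) + 1` (1-based) for `i ≤ n - 1`, and column `1` for the last row. -/
def star2 {m : ℕ} (w : Equiv.Perm (Fin m)) (i : Fin (m + 1)) : Fin (m + 1) :=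
  if h : (i : ℕ) < m then Fin.succ (w⁻¹ ⟨(i : ℕ), h⟩) else 0

/-- The column (0-based) of the entry `⋆₁` in row `i` of `A_w`: the rightmost column
to the left of the `⋆₂`-column of row `i` containing no `⋆₂` in any earlier row. -/
def star1col {m : ℕ} (w : Equiv.Perm (Fin m)) (i : Fin (m + 1)) : ℕ :=
  ((Finset.range (star2 w i : ℕ)).filter
    (fun c => ∀ i' : Fin (m + 1), i' < i → (star2 w i' : ℕ) ≠ c)).sup id

/-- The support (pattern of possibly-nonzero entries) of the matrix `A_w`. -/
def AwSupp {m : ℕ} (w : Equiv.Perm (Fin m)) (i c : Fin (m + 1)) : Prop :=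
  c = star2 w i ∨ ((i : ℕ) < m ∧ (c : ℕ) = star1col w i)

/-- The rank of the submatrix of `A` on rows `S` and the first `j` columns. -/
noncomputable def rkSub {n : ℕ} (A : Matrix (Fin n) (Fin n) ℂ) (S : Finset (Fin n))
    (j : ℕ) : ℕ :=
  (Matrix.of (fun (i : {i : Fin n // i ∈ S}) (k : {k : Fin n // (k : ℕ) < j}) =>
    A i.1 k.1)).rank

/-- The matrix obtained from `A` by deleting the first row and the column with
0-based index `r1` (1-based index `r1 + 1`), reindexing later columns. -/
def delMat {m : ℕ} (r1 : ℕ) (A : Matrix (Fin (m + 2)) (Fin (m + 2)) ℂ) :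
    Matrix (Fin (m + 1)) (Fin (m + 1)) ℂ :=
  Matrix.of fun i c => A i.succ (if (c : ℕ) < r1 then c.castSucc else c.succ)



open Finset

def eDel (r c : ℕ) : ℕ := if c < r then c else c + 1

lemma succAbove_val {n : ℕ} (p : Fin (n+1)) (i : Fin n) :
    (p.succAbove i : ℕ) = if (i : ℕ) < (p : ℕ) then (i : ℕ) else (i : ℕ) + 1 := by
  rw [Fin.succAbove]
  split_ifs with h1 h2 h3 <;> simp_all [Fin.lt_def]

lemma card_le_eq {M : ℕ} (u : Equiv.Perm (Fin M)) (y : Fin M) :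
    (univ.filter (fun k => u⁻¹ k ≤ y)).card = (y : ℕ) + 1 := by
  have h : (univ.filter (fun k => u⁻¹ k ≤ y)) = (Finset.Iic y).image u := by
    ext k
    simp only [mem_filter, mem_univ, true_and, mem_image, Finset.mem_Iic]
    constructor
    · intro hk; exact ⟨u⁻¹ k, hk, u.apply_symm_apply k⟩
    · rintro ⟨x, hx, rfl⟩; simpa using hx
  rw [h, Finset.card_image_of_injective _ u.injective, Fin.card_Iic]

lemma card_split {M : ℕ} (p q : Fin M → Prop) [DecidablePred p] [DecidablePred q] :
    (univ.filter fun k => p k ∧ q k).card + (univ.filter fun k => ¬ p k ∧ q k).card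
      = (univ.filter q).card := by
  have h1 : (univ.filter fun k => p k ∧ q k) = (univ.filter q).filter p := by
    ext k; simp [and_comm]
  have h2 : (univ.filter fun k => ¬ p k ∧ q k) = (univ.filter q).filter (fun k => ¬ p k) := by
    ext k; simp [and_comm]
  rw [h1, h2, Finset.card_filter_add_card_filter_not]

lemma key {m : ℕ} (w : Equiv.Perm (Fin (m+1))) (w' : Equiv.Perm (Fin m))
    (hww' : ∀ j : Fin m, rvecS w' j = rvecS w j.succ) (j : Fin m) :
    w⁻¹ j.succ = (w⁻¹ 0).succAbove (w'⁻¹ j) := by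
  set a' : Fin (m+1) := w⁻¹ 0 with ha'
  suffices h : ∀ N : ℕ, ∀ j : Fin m, (j : ℕ) < N → w⁻¹ j.succ = a'.succAbove (w'⁻¹ j) by
    exact h ((j:ℕ)+1) j (Nat.lt_succ_self _)
  intro N
  induction N with
  | zero => intro j hj; omega
  | succ N ih =>
    intro j hj
    have IH : ∀ k : Fin m, k < j → w⁻¹ k.succ = a'.succAbove (w'⁻¹ k) := by
      intro k hk
      have hk' : (k:ℕ) < (j:ℕ) := hk
      exact ih k (by omega)
    -- Claim A
    have cntA : ∀ x : Fin m,
        (univ.filter fun k : Fin (m+1) => j.succ ≤ k ∧ w⁻¹ k ≤ a'.succAbove x).card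
        = (univ.filter fun k : Fin m => j ≤ k ∧ w'⁻¹ k ≤ x).card := by
      intro x
      set y := a'.succAbove x with hy
      have e1 : (univ.filter fun k : Fin (m+1) => j.succ ≤ k ∧ w⁻¹ k ≤ y).card
          + (univ.filter fun k : Fin (m+1) => ¬ j.succ ≤ k ∧ w⁻¹ k ≤ y).card = (y:ℕ) + 1 := by
        rw [card_split, card_le_eq]
      have e2 : (univ.filter fun k : Fin m => j ≤ k ∧ w'⁻¹ k ≤ x).card
          + (univ.filter fun k : Fin m => ¬ j ≤ k ∧ w'⁻¹ k ≤ x).card = (x:ℕ) + 1 := by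
        rw [card_split, card_le_eq]
      have e3 : (univ.filter fun k : Fin (m+1) => ¬ j.succ ≤ k ∧ w⁻¹ k ≤ y).card
          = (if (a':ℕ) ≤ (y:ℕ) then 1 else 0)
            + (univ.filter fun k : Fin m => ¬ j ≤ k ∧ w'⁻¹ k ≤ x).card := by
        rw [Fin.card_filter_univ_succ' (fun k : Fin (m+1) => ¬ j.succ ≤ k ∧ w⁻¹ k ≤ y)]
        congr 1
        · have h0 : (¬ j.succ ≤ (0 : Fin (m+1)) ∧ w⁻¹ 0 ≤ y) ↔ ((a':ℕ) ≤ (y:ℕ)) := by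
            rw [← ha']
            constructor
            · intro hh; exact hh.2
            · intro hh
              refine ⟨?_, hh⟩
              intro hcon
              exact (Fin.succ_ne_zero j) (le_antisymm hcon (Fin.zero_le _))
          simp only [h0]
        · congr 1
          apply Finset.filter_congr
          intro k _
          rw [Fin.succ_le_succ_iff]
          by_cases hjk : j ≤ k
          · simp [hjk]
          · have hkj : k < j := not_le.1 hjk
            have := IH k hkj
            rw [this, hy]
            simp [Fin.succAbove_le_succAbove_iff]
      have hyv : (y:ℕ) = if (x:ℕ) < (a':ℕ) then (x:ℕ) else (x:ℕ)+1 := succAbove_val a' x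
      split_ifs at e3 hyv <;> omega
    -- Claim B : monotonicity of counting
    have cntMono : ∀ x y : Fin (m+1), x < y → (∃ k, j.succ ≤ k ∧ w⁻¹ k = y) →
        (univ.filter fun k : Fin (m+1) => j.succ ≤ k ∧ w⁻¹ k ≤ x).card
        < (univ.filter fun k : Fin (m+1) => j.succ ≤ k ∧ w⁻¹ k ≤ y).card := by
      rintro x y hxy ⟨k₀, hk₀, hk₀'⟩
      apply Finset.card_lt_card
      rw [Finset.ssubset_iff_of_subset]
      · refine ⟨k₀, by simp only [mem_filter, mem_univ, true_and]; exact ⟨hk₀, hk₀'.le⟩, ?_⟩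
        simp only [mem_filter, mem_univ, true_and, hk₀']
        intro hcon
        exact absurd (hcon.2) (not_le.2 hxy)
      · intro k hk
        simp only [mem_filter, mem_univ, true_and] at hk ⊢
        exact ⟨hk.1, hk.2.trans hxy.le⟩
    set z := a'.succAbove (w'⁻¹ j) with hz
    have hzmem : ∃ k, j.succ ≤ k ∧ w⁻¹ k = z := by
      refine ⟨w z, ?_, w.symm_apply_apply z⟩
      by_contra hcon
      push_neg at hcon
      rcases Fin.eq_zero_or_eq_succ (w z) with h0 | ⟨k₁, hk₁⟩
      · have hz0 : z = a' := by
          rw [ha', ← h0, Equiv.Perm.inv_def, Equiv.symm_apply_apply]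
        exact Fin.succAbove_ne a' (w'⁻¹ j) hz0
      · have hk₁j : k₁ < j := by
          rw [hk₁] at hcon
          exact Fin.succ_lt_succ_iff.1 hcon
        have h1 : w⁻¹ k₁.succ = z := by rw [← hk₁, Equiv.Perm.inv_def, Equiv.symm_apply_apply]
        have h2 := IH k₁ hk₁j
        rw [h1, hz] at h2
        have := Fin.succAbove_right_injective (p := a') h2.symm
        have := w'⁻¹.injective this
        exact absurd this (ne_of_lt hk₁j)
    have hwmem : ∃ k, j.succ ≤ k ∧ w⁻¹ k = w⁻¹ j.succ := ⟨j.succ, le_refl _, rfl⟩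
    have hcnt : (univ.filter fun k : Fin (m+1) => j.succ ≤ k ∧ w⁻¹ k ≤ z).card
        = (univ.filter fun k : Fin (m+1) => j.succ ≤ k ∧ w⁻¹ k ≤ w⁻¹ j.succ).card := by
      rw [hz, cntA (w'⁻¹ j)]
      exact hww' j
    rcases lt_trichotomy z (w⁻¹ j.succ) with h | h | h
    · exact absurd hcnt (ne_of_lt (cntMono z _ h hwmem))
    · exact h.symm
    · exact absurd hcnt.symm (ne_of_lt (cntMono _ z h hzmem))

lemma eDel_inj {r x y : ℕ} (h : eDel r x = eDel r y) : x = y := by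
  unfold eDel at h; split_ifs at h <;> omega

lemma eDel_lt_iff {r x y : ℕ} : eDel r x < eDel r y ↔ x < y := by
  unfold eDel; split_ifs <;> omega

lemma eDel_ne {r c : ℕ} (hr : 0 < r) : eDel r c ≠ r := by
  unfold eDel; split_ifs <;> omega

lemma eDel_zero {r : ℕ} (hr : 0 < r) : eDel r 0 = 0 := by
  unfold eDel; simp [hr]

lemma eDel_max (r x y : ℕ) : eDel r (max x y) = max (eDel r x) (eDel r y) := by
  unfold eDel; split_ifs <;> omega

lemma rvec0 {m : ℕ} (w : Equiv.Perm (Fin (m+1))) :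
    rvecS w 0 = ((w⁻¹ 0 : Fin (m+1)) : ℕ) + 1 := by
  unfold rvecS
  rw [show (univ.filter fun k : Fin (m+1) => 0 ≤ k ∧ w⁻¹ k ≤ w⁻¹ 0)
      = univ.filter fun k => w⁻¹ k ≤ w⁻¹ 0 by
    apply Finset.filter_congr; intro k _; simp [Fin.zero_le]]
  exact card_le_eq w _

lemma star2_succ {m : ℕ} (w : Equiv.Perm (Fin (m+1))) (w' : Equiv.Perm (Fin m))
    (hww' : ∀ j : Fin m, rvecS w' j = rvecS w j.succ) (r : ℕ)
    (hr : r = ((w⁻¹ 0 : Fin (m+1)) : ℕ) + 1) (i : Fin (m+1)) :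
    (star2 w i.succ : ℕ) = eDel r (star2 w' i : ℕ) := by
  unfold star2
  by_cases hi : (i:ℕ) < m
  · have h1 : ((i.succ : Fin (m+2)) : ℕ) < m + 1 := by simp; omega
    rw [dif_pos h1, dif_pos hi]
    have hfin : (⟨((i.succ : Fin (m+2)) : ℕ), h1⟩ : Fin (m+1)) = (⟨(i:ℕ), hi⟩ : Fin m).succ := by
      apply Fin.ext; simp
    rw [hfin, key w w' hww' ⟨(i:ℕ), hi⟩]
    rw [Fin.val_succ, Fin.val_succ, succAbove_val]
    unfold eDel
    split_ifs <;> omega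
  · have h1 : ¬ ((i.succ : Fin (m+2)) : ℕ) < m + 1 := by simp; omega
    rw [dif_neg h1, dif_neg hi]
    simp [eDel_zero (show 0 < r by omega)]

lemma star2_zero {m : ℕ} (w : Equiv.Perm (Fin (m+1))) (r : ℕ)
    (hr : r = ((w⁻¹ 0 : Fin (m+1)) : ℕ) + 1) :
    (star2 w (0 : Fin (m+2)) : ℕ) = r := by
  unfold star2
  rw [dif_pos (show ((0 : Fin (m+2)) : ℕ) < m+1 from Nat.succ_pos m)]
  have : (⟨((0 : Fin (m+2)) : ℕ), Nat.succ_pos m⟩ : Fin (m+1)) = 0 := rfl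
  rw [this, Fin.val_succ, hr]

lemma star1_succ {m : ℕ} (w : Equiv.Perm (Fin (m+1))) (w' : Equiv.Perm (Fin m))
    (hww' : ∀ j : Fin m, rvecS w' j = rvecS w j.succ) (r : ℕ)
    (hr : r = ((w⁻¹ 0 : Fin (m+1)) : ℕ) + 1) (i : Fin (m+1)) :
    star1col w i.succ = eDel r (star1col w' i) := by
  have hrpos : 0 < r := by omega
  unfold star1col
  have himg : (Finset.range (star2 w i.succ : ℕ)).filter
      (fun c => ∀ i' : Fin (m+2), i' < i.succ → (star2 w i' : ℕ) ≠ c)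
      = ((Finset.range (star2 w' i : ℕ)).filter
      (fun c => ∀ i'' : Fin (m+1), i'' < i → (star2 w' i'' : ℕ) ≠ c)).image (eDel r) := by
    ext c
    simp only [Finset.mem_filter, Finset.mem_range, Finset.mem_image]
    constructor
    · rintro ⟨hlt, hne⟩
      have hcr : c ≠ r := by
        have := hne 0 (Fin.succ_pos i)
        rw [star2_zero w r hr] at this
        omega
      rw [star2_succ w w' hww' r hr i] at hlt
      refine ⟨if c < r then c else c - 1, ⟨?_, ?_⟩, ?_⟩
      · rw [← @eDel_lt_iff r]
        have : eDel r (if c < r then c else c - 1) = c := by unfold eDel; split_ifs <;> omega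
        rw [this]; exact hlt
      · intro i'' hi'' hEq
        apply hne i''.succ (Fin.succ_lt_succ_iff.2 hi'')
        rw [star2_succ w w' hww' r hr i'', hEq]
        unfold eDel; split_ifs <;> omega
      · unfold eDel; split_ifs <;> omega
    · rintro ⟨c', ⟨hlt', hne'⟩, rfl⟩
      constructor
      · rw [star2_succ w w' hww' r hr i]
        exact eDel_lt_iff.2 hlt'
      · intro i' hi'
        induction i' using Fin.cases with
        | zero => rw [star2_zero w r hr]; exact (eDel_ne hrpos).symm
        | succ i'' =>
          rw [star2_succ w w' hww' r hr i'']
          intro hEq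
          exact hne' i'' (Fin.succ_lt_succ_iff.1 hi') (eDel_inj hEq)
  rw [himg, Finset.sup_image]
  exact (Finset.comp_sup_eq_sup_comp (eDel r) (fun x y => eDel_max r x y) (eDel_zero hrpos)).symm

lemma rank_reindex' {I I' K K' : Type*} [Fintype I] [Fintype I'] [Fintype K] [Fintype K']
    (e₁ : I ≃ I') (e₂ : K ≃ K') (M : Matrix I' K' ℂ) :
    (M.submatrix e₁ e₂).rank = M.rank := by
  have h : M.submatrix e₁ e₂ = Matrix.reindex e₁.symm e₂.symm M := rfl
  rw [h, Matrix.rank, Matrix.rank, Matrix.mulVecLin_reindex, LinearMap.range_comp,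
    LinearMap.range_comp, LinearEquiv.range, Submodule.map_top, LinearEquiv.finrank_map_eq]

lemma rank_drop {I K K' : Type*} [Fintype I] [Fintype K] [Fintype K']
    (M : Matrix I K' ℂ) (f : K → K')
    (hz : ∀ k', (∀ k, f k ≠ k') → ∀ i, M i k' = 0) :
    (M.submatrix id f).rank = M.rank := by
  rw [Matrix.rank_eq_finrank_span_cols, Matrix.rank_eq_finrank_span_cols]
  have hspan : Submodule.span ℂ (Set.range (M.submatrix id f).transpose)
      = Submodule.span ℂ (Set.range M.transpose) := by
    apply le_antisymm
    · apply Submodule.span_mono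
      rintro _ ⟨k, rfl⟩
      exact ⟨f k, rfl⟩
    · rw [Submodule.span_le]
      rintro _ ⟨k', rfl⟩
      by_cases h : ∃ k, f k = k'
      · obtain ⟨k, rfl⟩ := h
        exact Submodule.subset_span ⟨k, rfl⟩
      · push_neg at h
        have hzero : M.transpose k' = 0 := funext fun i => hz k' h i
        rw [hzero]
        exact Submodule.zero_mem _
  rw [show (M.submatrix id f).col = (M.submatrix id f).transpose from rfl,
    show M.col = M.transpose from rfl, hspan]

/-- Rank lemma for deletion: if `w' ∈ S_{n-2}` has vector `(r_2, …, r_{n-1})`, then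
`A_{w'}` is obtained from `A_w` by deleting the first row and the `(r_1+1)`-st column,
and the ranks of corresponding submatrices compare as stated. -/
theorem stmt12 (m : ℕ) (w : Equiv.Perm (Fin (m + 1))) (w' : Equiv.Perm (Fin m))
    (hww' : ∀ j : Fin m, rvecS w' j = rvecS w j.succ)
    (A : Matrix (Fin (m + 2)) (Fin (m + 2)) ℂ)
    (hA : ∀ i c, A i c ≠ 0 ↔ AwSupp w i c) :
    (∀ i c, delMat (rvecS w 0) A i c ≠ 0 ↔ AwSupp w' i c) ∧
    ∀ S : Finset (Fin (m + 1)),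
      (∀ j, j ≤ rvecS w 0 →
        rkSub (delMat (rvecS w 0) A) S j = rkSub A (S.image Fin.succ) j) ∧
      (∀ j, rvecS w 0 ≤ j →
        rkSub (delMat (rvecS w 0) A) S j = rkSub A (S.image Fin.succ) (j + 1)) := by
  set r := rvecS w 0 with hrdef
  have hr : r = ((w⁻¹ 0 : Fin (m+1)) : ℕ) + 1 := rvec0 w
  have hrpos : 0 < r := by omega
  have hrle : r ≤ m + 1 := by have := (w⁻¹ 0 : Fin (m+1)).isLt; omega
  have hembv : ∀ c : Fin (m+1),
      ((if (c:ℕ) < r then c.castSucc else c.succ : Fin (m+2)) : ℕ) = eDel r (c:ℕ) := by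
    intro c; unfold eDel; split_ifs <;> simp
  have part1 : ∀ i c, delMat r A i c ≠ 0 ↔ AwSupp w' i c := by
    intro i c
    have hd : delMat r A i c = A i.succ (if (c:ℕ) < r then c.castSucc else c.succ) := rfl
    rw [hd, hA]
    unfold AwSupp
    constructor
    · rintro (h | ⟨hlt, h⟩)
      · left
        have hv := congrArg Fin.val h
        rw [hembv c, star2_succ w w' hww' r hr i] at hv
        exact Fin.ext (eDel_inj hv)
      · right
        have hi : (i:ℕ) < m := by simp at hlt; omega
        refine ⟨hi, ?_⟩
        rw [hembv c, star1_succ w w' hww' r hr i] at h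
        exact eDel_inj h
    · rintro (h | ⟨hi, h⟩)
      · left
        apply Fin.ext
        rw [hembv c, star2_succ w w' hww' r hr i,
          show (c:ℕ) = ((star2 w' i : Fin (m+1)) : ℕ) from congrArg Fin.val h]
      · right
        refine ⟨by simp; omega, ?_⟩
        rw [hembv c, star1_succ w w' hww' r hr i, h]
  have hcol : ∀ (i : Fin (m+1)) (c : Fin (m+2)), (c : ℕ) = r → A i.succ c = 0 := by
    intro i c hc
    by_contra hcon
    rcases (hA _ _).1 hcon with h | ⟨hlt, h⟩
    · have hv := congrArg Fin.val h
      rw [star2_succ w w' hww' r hr i, hc] at hv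
      exact eDel_ne hrpos hv.symm
    · rw [star1_succ w w' hww' r hr i] at h
      exact eDel_ne hrpos (h.symm.trans hc)
  refine ⟨part1, ?_⟩
  intro S
  let ρ : {i : Fin (m+1) // i ∈ S} ≃ {i' : Fin (m+2) // i' ∈ S.image Fin.succ} :=
    Equiv.ofBijective (fun i => ⟨i.1.succ, Finset.mem_image_of_mem _ i.2⟩)
      ⟨by rintro ⟨i₁, h₁⟩ ⟨i₂, h₂⟩ h
          apply Subtype.ext
          exact Fin.succ_injective _ (congrArg Subtype.val h),
       by rintro ⟨i', hi'⟩
          obtain ⟨x, hx, rfl⟩ := Finset.mem_image.1 hi'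
          exact ⟨⟨x, hx⟩, rfl⟩⟩
  constructor
  · intro j hj
    let κ : {k : Fin (m+1) // (k:ℕ) < j} ≃ {k : Fin (m+2) // (k:ℕ) < j} :=
      Equiv.ofBijective (fun k => ⟨k.1.castSucc, by simpa using k.2⟩)
        ⟨by rintro ⟨k₁, h₁⟩ ⟨k₂, h₂⟩ h
            apply Subtype.ext
            apply Fin.ext
            exact congrArg (fun t : {k : Fin (m+2) // (k:ℕ) < j} => (t.1 : ℕ)) h,
         by rintro ⟨k', hk'⟩
            have hk'm : (k' : ℕ) < m + 1 := by omega
            exact ⟨⟨⟨(k' : ℕ), hk'm⟩, hk'⟩, Subtype.ext (Fin.ext rfl)⟩⟩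
    unfold rkSub
    have hM : (Matrix.of fun (i : {i : Fin (m+1) // i ∈ S}) (k : {k : Fin (m+1) // (k:ℕ) < j}) =>
        delMat r A i.1 k.1)
        = (Matrix.of fun (i' : {i' : Fin (m+2) // i' ∈ S.image Fin.succ})
            (k : {k : Fin (m+2) // (k:ℕ) < j}) => A i'.1 k.1).submatrix ρ κ := by
      ext i k
      show A i.1.succ (if (k.1:ℕ) < r then k.1.castSucc else k.1.succ) = A (ρ i).1 (κ k).1
      have h2 : (κ k).1 = k.1.castSucc := rfl
      rw [h2, if_pos (lt_of_lt_of_le k.2 hj)]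
      rfl
    rw [hM]
    exact rank_reindex' ρ κ _
  · intro j hj
    let f : {k : Fin (m+1) // (k:ℕ) < j} → {k : Fin (m+2) // (k:ℕ) < j + 1} :=
      fun k => ⟨if (k.1:ℕ) < r then k.1.castSucc else k.1.succ, by
        have := k.2; split_ifs <;> simp <;> omega⟩
    have fval : ∀ k, ((f k).1 : ℕ) = eDel r ((k.1 : Fin (m+1)) : ℕ) := fun k => hembv k.1
    have hz : ∀ (k' : {k : Fin (m+2) // (k:ℕ) < j+1}), (∀ k, f k ≠ k') →
        ∀ (i : {i : Fin (m+1) // i ∈ S}),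
        ((Matrix.of fun (i' : {i' : Fin (m+2) // i' ∈ S.image Fin.succ})
            (k : {k : Fin (m+2) // (k:ℕ) < j+1}) => A i'.1 k.1).submatrix ρ (Equiv.refl _))
          i k' = 0 := by
      intro k' hk' i
      have hkr : (k'.1 : ℕ) = r := by
        by_contra hne
        rcases Nat.lt_or_ge (k'.1 : ℕ) r with hlt | hge
        · have hb1 : (k'.1 : ℕ) < m + 1 := by omega
          have hb2 : ((⟨(k'.1:ℕ), hb1⟩ : Fin (m+1)) : ℕ) < j := by show (k'.1:ℕ) < j; omega
          apply hk' ⟨⟨(k'.1:ℕ), hb1⟩, hb2⟩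
          apply Subtype.ext; apply Fin.ext
          rw [fval]
          show eDel r (k'.1 : ℕ) = (k'.1 : ℕ)
          unfold eDel; split_ifs <;> omega
        · have hb1 : (k'.1 : ℕ) - 1 < m + 1 := by have := k'.1.isLt; omega
          have hb2 : ((⟨(k'.1:ℕ) - 1, hb1⟩ : Fin (m+1)) : ℕ) < j := by
            show (k'.1:ℕ) - 1 < j; have := k'.2; omega
          apply hk' ⟨⟨(k'.1:ℕ) - 1, hb1⟩, hb2⟩
          apply Subtype.ext; apply Fin.ext
          rw [fval]
          show eDel r ((k'.1 : ℕ) - 1) = (k'.1 : ℕ)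
          unfold eDel; split_ifs <;> omega
      show A (ρ i).1 k'.1 = 0
      exact hcol i.1 k'.1 hkr
    unfold rkSub
    have hM : (Matrix.of fun (i : {i : Fin (m+1) // i ∈ S}) (k : {k : Fin (m+1) // (k:ℕ) < j}) =>
        delMat r A i.1 k.1)
        = ((Matrix.of fun (i' : {i' : Fin (m+2) // i' ∈ S.image Fin.succ})
            (k : {k : Fin (m+2) // (k:ℕ) < j+1}) => A i'.1 k.1).submatrix ρ (Equiv.refl _)).submatrix
            id f := rfl
    rw [hM, rank_drop _ f hz]
    exact rank_reindex' ρ (Equiv.refl _) _
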